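/- If ∑_{1≤i<j≤r} ‖qᵢρᵢ − q_jρ_j‖₁ ≤ (r−1)²/(r+1), then the new lower bound L₂_new = (1/r)(1 + (1/(r−1))∑_{i<j}‖qᵢρᵢ − q_jρ_j‖₁) is at least the Barnum–Knill lower bound L₂ = 1 − ∑_{i<j} √(qᵢq_j)·F(ρᵢ,ρ_j). -/

import Mathlib

open scoped ComplexOrder

/-- The square root of a positive semidefinite matrix, spelled out as the former
`Matrix.PosSemidef.sqrt` (removed from Mathlib). -/
noncomputable def psdSqrt {n : ℕ} {A : Matrix (Fin n) (Fin n) ℂ} (hA : A.PosSemidef) :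
    Matrix (Fin n) (Fin n) ℂ :=
  (hA.1.eigenvectorUnitary : Matrix (Fin n) (Fin n) ℂ) *
    Matrix.diagonal ((↑) ∘ Real.sqrt ∘ hA.1.eigenvalues) *
    (star (hA.1.eigenvectorUnitary : Matrix (Fin n) (Fin n) ℂ))

/-- The operator absolute value `√(AᴴA)` of a matrix. -/
noncomputable def matAbs {n : ℕ} (A : Matrix (Fin n) (Fin n) ℂ) : Matrix (Fin n) (Fin n) ℂ :=
  psdSqrt (Matrix.posSemidef_conjTranspose_mul_self A)

/-- The trace norm `‖A‖₁ = tr √(AᴴA)`. -/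
noncomputable def traceNorm {n : ℕ} (A : Matrix (Fin n) (Fin n) ℂ) : ℝ :=
  ((matAbs A).trace).re

/-- The positive part `A⁺ = (|A| + A)/2` of a self-adjoint matrix `A`, so that
`A = A⁺ - A⁻` with `A⁺, A⁻ ≥ 0`. -/
noncomputable def matPosPart {n : ℕ} (A : Matrix (Fin n) (Fin n) ℂ) : Matrix (Fin n) (Fin n) ℂ :=
  (2 : ℂ)⁻¹ • (matAbs A + A)

/-- A density operator: positive semidefinite with unit trace. -/
def IsDensity {n : ℕ} (ρ : Matrix (Fin n) (Fin n) ℂ) : Prop :=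
  ρ.PosSemidef ∧ ρ.trace = 1

/-- A POVM with `r` outcomes: positive semidefinite effects summing to the identity. -/
def IsPOVM {n r : ℕ} (M : Fin r → Matrix (Fin n) (Fin n) ℂ) : Prop :=
  (∀ i, (M i).PosSemidef) ∧ ∑ i, M i = 1

/-- Success probability `∑ i, q i * tr (ρ i * M i)` of a measurement. -/
noncomputable def successProb {n r : ℕ} (q : Fin r → ℝ)
    (ρ M : Fin r → Matrix (Fin n) (Fin n) ℂ) : ℝ :=
  ∑ i, q i * ((ρ i * M i).trace).re

/-- Optimal success probability under minimum-error discrimination. -/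
noncomputable def optSuccess {n r : ℕ} (q : Fin r → ℝ)
    (ρ : Fin r → Matrix (Fin n) (Fin n) ℂ) : ℝ :=
  sSup {p | ∃ M, IsPOVM M ∧ p = successProb q ρ M}

/-- The fidelity `F(ρ,σ) = ‖√ρ √σ‖₁` of two positive semidefinite matrices. -/
noncomputable def fidelity {n : ℕ} {ρ σ : Matrix (Fin n) (Fin n) ℂ}
    (hρ : ρ.PosSemidef) (hσ : σ.PosSemidef) : ℝ :=
  traceNorm (psdSqrt hρ * psdSqrt hσ)

open scoped MatrixOrder in
theorem psdSqrt_eq_cfc {n : ℕ} {A : Matrix (Fin n) (Fin n) ℂ} (hA : A.PosSemidef) :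
    psdSqrt hA = CFC.sqrt A := by
  rw [CFC.sqrt_eq_real_sqrt A hA.nonneg, cfcₙ_eq_cfc, hA.1.cfc_eq, Matrix.IsHermitian.cfc]
  simp [psdSqrt, Unitary.conjStarAlgAut_apply]

noncomputable def Matrix.PosSemidef.sqrt {n : ℕ} {A : Matrix (Fin n) (Fin n) ℂ}
    (hA : A.PosSemidef) : Matrix (Fin n) (Fin n) ℂ :=
  psdSqrt hA

open scoped MatrixOrder in
theorem Matrix.PosSemidef.sqrt_mul_self {n : ℕ} {A : Matrix (Fin n) (Fin n) ℂ}
    (hA : A.PosSemidef) : hA.sqrt * hA.sqrt = A := by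
  rw [Matrix.PosSemidef.sqrt, psdSqrt_eq_cfc]
  exact CFC.sqrt_mul_sqrt_self A hA.nonneg

open scoped MatrixOrder in
theorem Matrix.PosSemidef.posSemidef_sqrt {n : ℕ} {A : Matrix (Fin n) (Fin n) ℂ}
    (hA : A.PosSemidef) : hA.sqrt.PosSemidef := by
  rw [Matrix.PosSemidef.sqrt, psdSqrt_eq_cfc]
  exact Matrix.nonneg_iff_posSemidef.mp (CFC.sqrt_nonneg A)

open scoped MatrixOrder in
theorem Matrix.PosSemidef.eq_sqrt_of_sq_eq {n : ℕ} {B : Matrix (Fin n) (Fin n) ℂ}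
    (hB : B.PosSemidef) {A : Matrix (Fin n) (Fin n) ℂ} (hA : A.PosSemidef) (h : B ^ 2 = A) :
    B = hA.sqrt := by
  rw [Matrix.PosSemidef.sqrt, psdSqrt_eq_cfc]
  exact (CFC.sqrt_unique (by rw [← sq]; exact h) hB.nonneg).symm


section AuxSection
open Matrix
variable {n : ℕ}

namespace Aux


/-- spectral conjugation -/
noncomputable def herm {X : Matrix (Fin n) (Fin n) ℂ} (hX : X.IsHermitian) (f : ℝ → ℝ) :
    Matrix (Fin n) (Fin n) ℂ :=
  (hX.eigenvectorUnitary : Matrix (Fin n) (Fin n) ℂ) *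
    Matrix.diagonal (fun i => (f (hX.eigenvalues i) : ℂ)) *
    star (hX.eigenvectorUnitary : Matrix (Fin n) (Fin n) ℂ)

variable {X : Matrix (Fin n) (Fin n) ℂ} (hX : X.IsHermitian)

lemma star_mul_self_eigen :
    star (hX.eigenvectorUnitary : Matrix (Fin n) (Fin n) ℂ)
      * (hX.eigenvectorUnitary : Matrix (Fin n) (Fin n) ℂ) = 1 :=
  Matrix.mem_unitaryGroup_iff'.mp hX.eigenvectorUnitary.2

lemma mul_star_self_eigen :
    (hX.eigenvectorUnitary : Matrix (Fin n) (Fin n) ℂ)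
      * star (hX.eigenvectorUnitary : Matrix (Fin n) (Fin n) ℂ) = 1 :=
  Matrix.mem_unitaryGroup_iff.mp hX.eigenvectorUnitary.2

lemma herm_mul (f g : ℝ → ℝ) : herm hX f * herm hX g = herm hX (fun x => f x * g x) := by
  unfold herm
  simp only [← mul_assoc]
  rw [mul_assoc ((hX.eigenvectorUnitary : Matrix (Fin n) (Fin n) ℂ) * Matrix.diagonal _)
    (star (hX.eigenvectorUnitary : Matrix (Fin n) (Fin n) ℂ)) _, star_mul_self_eigen, mul_one,
    mul_assoc _ (Matrix.diagonal _) (Matrix.diagonal _), diagonal_mul_diagonal]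
  congr 2
  funext i
  push_cast
  ring

lemma herm_posSemidef {f : ℝ → ℝ} (hf : ∀ x, 0 ≤ f x) : (herm hX f).PosSemidef := by
  unfold herm
  rw [Matrix.star_eq_conjTranspose]
  exact (Matrix.PosSemidef.diagonal (fun i => by
    simpa using (RCLike.ofReal_nonneg (K := ℂ)).mpr (hf _))).mul_mul_conjTranspose_same _

lemma herm_id : herm hX (fun x => x) = X := by
  unfold herm
  exact hX.spectral_theorem.symm

lemma herm_one : herm hX (fun _ => 1) = 1 := by
  unfold herm
  simp only [Complex.ofReal_one]
  rw [Matrix.diagonal_one, mul_one, mul_star_self_eigen]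

lemma herm_add (f g : ℝ → ℝ) : herm hX (fun x => f x + g x) = herm hX f + herm hX g := by
  unfold herm
  simp only [Complex.ofReal_add, ← Matrix.diagonal_add]
  rw [mul_add, add_mul]

lemma herm_sub (f g : ℝ → ℝ) : herm hX (fun x => f x - g x) = herm hX f - herm hX g := by
  have := herm_add hX (fun x => f x - g x) g
  simp only [sub_add_cancel] at this
  rw [this]; simp

lemma herm_trace (f : ℝ → ℝ) : (herm hX f).trace = ∑ i, (f (hX.eigenvalues i) : ℂ) := by
  unfold herm
  rw [Matrix.trace_mul_cycle, star_mul_self_eigen, one_mul, Matrix.trace_diagonal]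

lemma herm_conj_diag (f : ℝ → ℝ) :
    star (hX.eigenvectorUnitary : Matrix (Fin n) (Fin n) ℂ) * herm hX f
      * (hX.eigenvectorUnitary : Matrix (Fin n) (Fin n) ℂ)
      = Matrix.diagonal (fun i => (f (hX.eigenvalues i) : ℂ)) := by
  unfold herm
  simp only [← mul_assoc]
  rw [star_mul_self_eigen, one_mul, mul_assoc, star_mul_self_eigen, mul_one]

lemma diag_re_nonneg {S : Matrix (Fin n) (Fin n) ℂ} (hS : S.PosSemidef) (i : Fin n) :
    0 ≤ (S i i).re := by
  have h := hS.dotProduct_mulVec_nonneg (Pi.single i 1)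
  have : star (Pi.single i 1 : Fin n → ℂ) ⬝ᵥ S *ᵥ (Pi.single i 1) = S i i := by
    simp [dotProduct, Matrix.mulVec, Pi.single_apply, Finset.sum_ite_eq, apply_ite,
      mul_comm]
  rw [this] at h
  exact (RCLike.nonneg_iff.mp h).1

lemma trace_re_nonneg {S : Matrix (Fin n) (Fin n) ℂ} (hS : S.PosSemidef) :
    0 ≤ S.trace.re := by
  rw [Matrix.trace]
  simp only [Complex.re_sum]
  exact Finset.sum_nonneg fun i _ => diag_re_nonneg hS i

lemma trace_mul_psd_nonneg {S Y : Matrix (Fin n) (Fin n) ℂ} (hS : S.PosSemidef)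
    (hY : Y.PosSemidef) : 0 ≤ ((S * Y).trace).re := by
  have h1 : S * Y = hS.sqrt * (hS.sqrt * Y) := by
    rw [← mul_assoc, hS.sqrt_mul_self]
  rw [h1, Matrix.trace_mul_comm]
  have h2 : (hS.sqrt * Y * hS.sqrt).PosSemidef := by
    have := hY.mul_mul_conjTranspose_same hS.sqrt
    rwa [hS.posSemidef_sqrt.1.eq] at this
  exact trace_re_nonneg h2

/-- `|X| = herm hX abs` for hermitian `X`. -/
lemma matAbs_eq_herm : matAbs X = herm hX (fun x => |x|) := by
  have hpsd : (herm hX (fun x => |x|)).PosSemidef := herm_posSemidef hX (fun x => abs_nonneg x)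
  have hsq : (herm hX (fun x => |x|)) ^ 2 = Xᴴ * X := by
    rw [pow_two, herm_mul]
    have h1 : (fun x => |x| * |x|) = (fun x : ℝ => x * x) := by
      funext x; exact abs_mul_abs_self x
    rw [h1, ← herm_mul hX (fun x => x) (fun x => x), herm_id, hX.eq]
  exact (hpsd.eq_sqrt_of_sq_eq _ hsq).symm

lemma trace_mul_le_of_contraction {S C : Matrix (Fin n) (Fin n) ℂ} (hS : S.PosSemidef)
    (hC : (1 - C).PosSemidef) : ((S * C).trace).re ≤ (S.trace).re := by
  have h := trace_mul_psd_nonneg hS hC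
  have : S * (1 - C) = S - S * C := by noncomm_ring
  rw [this, Matrix.trace_sub, Complex.sub_re] at h
  linarith

lemma neg_trace_mul_le_of_contraction {S C : Matrix (Fin n) (Fin n) ℂ} (hS : S.PosSemidef)
    (hC : (1 + C).PosSemidef) : -((S.trace).re) ≤ ((S * C).trace).re := by
  have h := trace_mul_psd_nonneg hS hC
  have : S * (1 + C) = S + S * C := by noncomm_ring
  rw [this, Matrix.trace_add, Complex.add_re] at h
  linarith

/-- trace against a contraction is at most the trace of |D| -/
lemma trace_mul_contraction_le {D C : Matrix (Fin n) (Fin n) ℂ} (hD : D.IsHermitian)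
    (hC1 : (1 - C).PosSemidef) (hC2 : (1 + C).PosSemidef) :
    ((D * C).trace).re ≤ ((matAbs D).trace).re := by
  have hplus : (matAbs D + D).PosSemidef := by
    rw [matAbs_eq_herm hD]
    have := herm_posSemidef hD (f := fun x => |x| + x) (fun x => by show (0:ℝ) ≤ |x| + x; linarith [neg_abs_le x, abs_nonneg x])
    rw [herm_add] at this
    convert this using 2
    exact (herm_id hD).symm
  have hminus : (matAbs D - D).PosSemidef := by
    rw [matAbs_eq_herm hD]
    have := herm_posSemidef hD (f := fun x => |x| - x) (fun x => by simp [abs_nonneg]; linarith [le_abs_self x])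
    rw [herm_sub] at this
    convert this using 2
    exact (herm_id hD).symm
  have h1 := trace_mul_le_of_contraction hplus hC1
  have h2 := neg_trace_mul_le_of_contraction hminus hC2
  have e1 : (matAbs D + D) * C = matAbs D * C + D * C := by noncomm_ring
  have e2 : (matAbs D - D) * C = matAbs D * C - D * C := by noncomm_ring
  rw [e1, Matrix.trace_add, Complex.add_re, Matrix.trace_add, Complex.add_re] at h1
  rw [e2, Matrix.trace_sub, Complex.sub_re, Matrix.trace_sub, Complex.sub_re] at h2
  linarith

lemma trace_mul_herm_eq (G : Matrix (Fin n) (Fin n) ℂ) (f : ℝ → ℝ) :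
    (G * herm hX f).trace = ∑ i, (f (hX.eigenvalues i) : ℂ) *
      ((star (hX.eigenvectorUnitary : Matrix (Fin n) (Fin n) ℂ) * G
        * (hX.eigenvectorUnitary : Matrix (Fin n) (Fin n) ℂ)) i i) := by
  set U := (hX.eigenvectorUnitary : Matrix (Fin n) (Fin n) ℂ)
  have h1 : G * herm hX f = (G * U * Matrix.diagonal (fun i => (f (hX.eigenvalues i) : ℂ)))
      * star U := by
    unfold herm; simp only [← mul_assoc]; rfl
  rw [h1, Matrix.trace_mul_comm, ← mul_assoc, ← mul_assoc]
  rw [Matrix.trace]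
  apply Finset.sum_congr rfl
  intro i _
  rw [Matrix.diag_apply, Matrix.mul_diagonal]
  ring

/-- Step 3: `re tr((A+B)|R|) ≥ re tr (R*R)` where `R = A - B`. -/
lemma trace_sum_mul_abs_ge {A B : Matrix (Fin n) (Fin n) ℂ} (hA : A.PosSemidef)
    (hB : B.PosSemidef) (hR : (A - B).IsHermitian) :
    (((A - B) * (A - B)).trace).re ≤ (((A + B) * herm hR (fun x => |x|)).trace).re := by
  set U := (hR.eigenvectorUnitary : Matrix (Fin n) (Fin n) ℂ) with hU
  have hsq : (A - B) * (A - B) = herm hR (fun x => x * x) := by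
    rw [← herm_mul hR (fun x => x) (fun x => x)]
    rw [herm_id hR]
  rw [hsq, herm_trace]
  rw [trace_mul_herm_eq]
  have hre : (∑ i, ((hR.eigenvalues i * hR.eigenvalues i : ℝ) : ℂ)).re
      = ∑ i, (hR.eigenvalues i * hR.eigenvalues i) := by
    simp [Complex.re_sum]
  rw [hre, Complex.re_sum]
  apply Finset.sum_le_sum
  intro i _
  have hMA : (star U * A * U).PosSemidef := by
    have := hA.conjTranspose_mul_mul_same U
    rwa [← Matrix.star_eq_conjTranspose] at this
  have hMB : (star U * B * U).PosSemidef := by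
    have := hB.conjTranspose_mul_mul_same U
    rwa [← Matrix.star_eq_conjTranspose] at this
  have ha := diag_re_nonneg hMA i
  have hb := diag_re_nonneg hMB i
  have hdiff : (star U * (A - B) * U) i i = ((hR.eigenvalues i : ℝ) : ℂ) := by
    have := herm_conj_diag hR (fun x => x)
    rw [herm_id hR] at this
    rw [← hU] at this
    rw [this, Matrix.diagonal_apply_eq]
  have hsum : (star U * (A + B) * U) i i = (star U * A * U) i i + (star U * B * U) i i := by
    have : star U * (A + B) * U = star U * A * U + star U * B * U := by noncomm_ring
    rw [this, Matrix.add_apply]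
  have hdiff' : (star U * A * U) i i - (star U * B * U) i i
      = ((hR.eigenvalues i : ℝ) : ℂ) := by
    rw [← hdiff]
    have : star U * (A - B) * U = star U * A * U - star U * B * U := by noncomm_ring
    rw [this, Matrix.sub_apply]
  -- real parts
  set a := ((star U * A * U) i i).re
  set b := ((star U * B * U) i i).re
  have hab : a - b = hR.eigenvalues i := by
    have := congrArg Complex.re hdiff'
    simpa [Complex.sub_re, a, b] using this
  have habs : |hR.eigenvalues i| ≤ a + b := by
    rw [← hab]
    calc |a - b| ≤ |a| + |b| := abs_sub _ _
    _ = a + b := by rw [abs_of_nonneg ha, abs_of_nonneg hb]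
  have hre2 : ((((|hR.eigenvalues i|) : ℝ) : ℂ) * ((star U * (A + B) * U) i i)).re
      = |hR.eigenvalues i| * (a + b) := by
    rw [hsum]
    simp [Complex.ofReal_mul, Complex.add_re, a, b]
  rw [hre2]
  calc hR.eigenvalues i * hR.eigenvalues i = |hR.eigenvalues i| * |hR.eigenvalues i| := by
        rw [← abs_mul, abs_mul_self]
    _ ≤ |hR.eigenvalues i| * (a + b) := by
        apply mul_le_mul_of_nonneg_left habs (abs_nonneg _)

lemma sign_fun : ∀ x : ℝ, x * Real.sign x = |x| := by
  intro x
  rcases lt_trichotomy x 0 with h | h | h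
  · rw [Real.sign_of_neg h, abs_of_neg h]; ring
  · simp [h]
  · rw [Real.sign_of_pos h, abs_of_pos h]; ring

lemma sign_le_one : ∀ x : ℝ, 0 ≤ 1 - Real.sign x := by
  intro x
  rcases lt_trichotomy x 0 with h | h | h
  · rw [Real.sign_of_neg h]; norm_num
  · simp [h]
  · rw [Real.sign_of_pos h]; norm_num

lemma neg_one_le_sign : ∀ x : ℝ, 0 ≤ 1 + Real.sign x := by
  intro x
  rcases lt_trichotomy x 0 with h | h | h
  · rw [Real.sign_of_neg h]; norm_num
  · simp [h]
  · rw [Real.sign_of_pos h]; norm_num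

theorem powers_stormer {P Q : Matrix (Fin n) (Fin n) ℂ} (hP : P.PosSemidef)
    (hQ : Q.PosSemidef) :
    (P.trace).re + (Q.trace).re - 2 * (((hP.sqrt * hQ.sqrt).trace).re)
      ≤ traceNorm (P - Q) := by
  have hApsd : hP.sqrt.PosSemidef := hP.posSemidef_sqrt
  have hBpsd : hQ.sqrt.PosSemidef := hQ.posSemidef_sqrt
  set A := hP.sqrt
  set B := hQ.sqrt
  have hR : (A - B).IsHermitian := hApsd.1.sub hBpsd.1
  have hD : (P - Q).IsHermitian := hP.1.sub hQ.1
  have hC1 : (1 - herm hR Real.sign).PosSemidef := by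
    have := herm_posSemidef hR (f := fun x => 1 - Real.sign x) sign_le_one
    rwa [herm_sub, herm_one] at this
  have hC2 : (1 + herm hR Real.sign).PosSemidef := by
    have := herm_posSemidef hR (f := fun x => 1 + Real.sign x) neg_one_le_sign
    rwa [herm_add, herm_one] at this
  have step1 : (((P - Q) * herm hR Real.sign).trace).re ≤ traceNorm (P - Q) :=
    trace_mul_contraction_le hD hC1 hC2
  have hAA : A * A = P := hP.sqrt_mul_self
  have hBB : B * B = Q := hQ.sqrt_mul_self
  have key : (A - B) * (A + B) + (A + B) * (A - B) = (P - Q) + (P - Q) := by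
    rw [← hAA, ← hBB]; noncomm_ring
  have hCR : herm hR Real.sign * (A - B) = herm hR (fun x => |x|) := by
    have h := herm_mul hR Real.sign (fun x => x)
    rw [herm_id hR] at h
    have hfun : (fun x : ℝ => Real.sign x * x) = fun x : ℝ => |x| :=
      funext fun x => by rw [mul_comm]; exact sign_fun x
    rw [hfun] at h
    exact h
  have hRC : (A - B) * herm hR Real.sign = herm hR (fun x => |x|) := by
    have h := herm_mul hR (fun x => x) Real.sign
    rw [herm_id hR] at h
    have hfun : (fun x : ℝ => x * Real.sign x) = fun x : ℝ => |x| :=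
      funext fun x => sign_fun x
    rw [hfun] at h
    exact h
  have step2 : ((P - Q) * herm hR Real.sign).trace
      = ((A + B) * herm hR (fun x => |x|)).trace := by
    have e1 : (((A - B) * (A + B)) * herm hR Real.sign).trace
        = ((A + B) * herm hR (fun x => |x|)).trace := by
      rw [Matrix.trace_mul_cycle, hCR]
      exact Matrix.trace_mul_comm _ _
    have e2 : (((A + B) * (A - B)) * herm hR Real.sign).trace
        = ((A + B) * herm hR (fun x => |x|)).trace := by
      rw [mul_assoc, hRC]
    have h2 : (((A - B) * (A + B)) * herm hR Real.sign).trace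
          + (((A + B) * (A - B)) * herm hR Real.sign).trace
        = ((P - Q) * herm hR Real.sign).trace + ((P - Q) * herm hR Real.sign).trace := by
      rw [← Matrix.trace_add, ← Matrix.trace_add, ← Matrix.add_mul, ← Matrix.add_mul, key]
    rw [e1, e2] at h2
    linear_combination -h2 / 2
  have step3 := trace_sum_mul_abs_ge hApsd hBpsd hR
  have key4 : (A - B) * (A - B) + (A * B + B * A) = P + Q := by
    rw [← hAA, ← hBB]; noncomm_ring
  have step4 : (((A - B) * (A - B)).trace).re
      = (P.trace).re + (Q.trace).re - 2 * (((A * B).trace).re) := by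
    have h := congrArg Matrix.trace key4
    rw [Matrix.trace_add, Matrix.trace_add, Matrix.trace_add,
      Matrix.trace_mul_comm B A] at h
    have h' := congrArg Complex.re h
    simp only [Complex.add_re] at h'
    linarith
  rw [step2] at step1
  linarith

lemma smul_posSemidef {c : ℝ} (hc : 0 ≤ c) {M : Matrix (Fin n) (Fin n) ℂ}
    (hM : M.PosSemidef) : ((c : ℂ) • M).PosSemidef := by
  refine Matrix.PosSemidef.of_dotProduct_mulVec_nonneg ?_ ?_
  · unfold Matrix.IsHermitian
    rw [Matrix.conjTranspose_smul, Complex.star_def, Complex.conj_ofReal, hM.1.eq]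
  · intro x
    rw [Matrix.smul_mulVec, dotProduct_smul, smul_eq_mul]
    exact mul_nonneg (by exact (RCLike.ofReal_nonneg (K := ℂ)).mpr hc) (hM.dotProduct_mulVec_nonneg x)

lemma contraction_trace_le {W Y : Matrix (Fin n) (Fin n) ℂ}
    (hW : (1 - Wᴴ * W).PosSemidef) (hY : Y.PosSemidef) :
    ((W * Y).trace).re ≤ (Y.trace).re := by
  have hZ : ((1 - W)ᴴ * (1 - W) + (1 - Wᴴ * W)).PosSemidef :=
    (Matrix.posSemidef_conjTranspose_mul_self _).add hW
  have hZeq : (1 - W)ᴴ * (1 - W) + (1 - Wᴴ * W) = 1 + 1 - W - Wᴴ := by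
    rw [Matrix.conjTranspose_sub, Matrix.conjTranspose_one]
    noncomm_ring
  rw [hZeq] at hZ
  have h0 := trace_mul_psd_nonneg hZ hY
  have hexp : (1 + 1 - W - Wᴴ) * Y = Y + Y - W * Y - Wᴴ * Y := by noncomm_ring
  rw [hexp, Matrix.trace_sub, Matrix.trace_sub, Matrix.trace_add, Complex.sub_re,
    Complex.sub_re, Complex.add_re] at h0
  have hconj : ((Wᴴ * Y).trace).re = ((W * Y).trace).re := by
    have h1 : (Wᴴ * Y)ᴴ = Yᴴ * W := by rw [Matrix.conjTranspose_mul,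
      Matrix.conjTranspose_conjTranspose]
    have h2 : ((Wᴴ * Y).trace) = star ((Yᴴ * W).trace) := by
      rw [← h1, Matrix.trace_conjTranspose]
      exact (star_star _).symm
    rw [h2, hY.1.eq, Matrix.trace_mul_comm]
    exact Complex.conj_re _
  rw [hconj] at h0
  linarith

theorem trace_re_le_traceNorm (M : Matrix (Fin n) (Fin n) ℂ) :
    (M.trace).re ≤ traceNorm M := by
  have hT : (matAbs M).PosSemidef := (Matrix.posSemidef_conjTranspose_mul_self M).posSemidef_sqrt
  have hTT : matAbs M * matAbs M = Mᴴ * M :=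
    (Matrix.posSemidef_conjTranspose_mul_self M).sqrt_mul_self
  set T := matAbs M with hTdef
  -- ∀ ε > 0, trace re ≤ traceNorm + ε * n
  have main : ∀ ε : ℝ, 0 < ε → (M.trace).re ≤ traceNorm M + ε * n := by
    intro ε hε
    set Tε : Matrix (Fin n) (Fin n) ℂ := T + (ε : ℂ) • 1 with hTε
    have hTεherm : Tε.IsHermitian := by
      unfold Matrix.IsHermitian
      rw [hTε, Matrix.conjTranspose_add, Matrix.conjTranspose_smul, Complex.star_def,
        Complex.conj_ofReal, Matrix.conjTranspose_one, hT.1.eq]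
    have hTεpd : Tε.PosDef := by
      refine Matrix.PosDef.of_dotProduct_mulVec_pos hTεherm fun x hx => ?_
      rw [hTε, Matrix.add_mulVec, dotProduct_add, Matrix.smul_mulVec,
        Matrix.one_mulVec, dotProduct_smul, smul_eq_mul]
      have h1 : 0 ≤ star x ⬝ᵥ T *ᵥ x := hT.dotProduct_mulVec_nonneg x
      have h2 : 0 < (ε : ℂ) * (star x ⬝ᵥ x) := by
        apply mul_pos
        · exact (RCLike.ofReal_pos (K := ℂ)).mpr hε
        · rcases (dotProduct_star_self_nonneg x).lt_or_eq with h | h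
          · exact h
          · exact absurd (dotProduct_star_self_eq_zero.mp h.symm) hx
      calc (0 : ℂ) < (ε : ℂ) * (star x ⬝ᵥ x) := h2
        _ ≤ star x ⬝ᵥ T *ᵥ x + (ε : ℂ) * (star x ⬝ᵥ x) := le_add_of_nonneg_left h1
    have hdet : IsUnit Tε.det := (Matrix.isUnit_iff_isUnit_det _).mp hTεpd.isUnit
    set V := M * Tε⁻¹ with hV
    have hVT : V * Tε = M := by
      rw [hV, mul_assoc, Matrix.nonsing_inv_mul _ hdet, mul_one]
    have hTinvH : Tε⁻¹ᴴ = Tε⁻¹ := (hTεherm.inv).eq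
    have hcontr : (1 - Vᴴ * V).PosSemidef := by
      have hsplit : 1 - Vᴴ * V = Tε⁻¹ᴴ * (Tε * Tε - T * T) * Tε⁻¹ := by
        rw [hV, Matrix.conjTranspose_mul]
        rw [hTinvH]
        have h2 : Tε⁻¹ * Mᴴ * (M * Tε⁻¹) = Tε⁻¹ * (Mᴴ * M) * Tε⁻¹ := by noncomm_ring
        rw [h2, ← hTT]
        have h1 : Tε⁻¹ * (Tε * Tε - T * T) * Tε⁻¹
            = Tε⁻¹ * Tε * (Tε * Tε⁻¹) - Tε⁻¹ * (T * T) * Tε⁻¹ := by noncomm_ring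
        rw [h1, Matrix.nonsing_inv_mul _ hdet, Matrix.mul_nonsing_inv _ hdet, one_mul]
      rw [hsplit]
      apply Matrix.PosSemidef.conjTranspose_mul_mul_same
      have hdiff : Tε * Tε - T * T = ((2 * ε : ℝ) : ℂ) • T + (((ε : ℝ) * ε : ℝ) : ℂ) • 1 := by
        rw [hTε]
        push_cast
        simp only [add_mul, mul_add, Matrix.smul_mul, Matrix.mul_smul, Matrix.one_mul,
          Matrix.mul_one, smul_smul]
        module
      rw [hdiff]
      exact (smul_posSemidef (by linarith) hT).add
        (smul_posSemidef (mul_nonneg hε.le hε.le) Matrix.PosSemidef.one)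
    have hb1 : ((V * T).trace).re ≤ (T.trace).re := contraction_trace_le hcontr hT
    have hb2 : (V.trace).re ≤ n := by
      have := contraction_trace_le hcontr Matrix.PosSemidef.one
      rw [mul_one, Matrix.trace_one] at this
      simpa using this
    have hsplit2 : M.trace = (V * T).trace + (ε : ℂ) * V.trace := by
      rw [← hVT, hTε, mul_add, Matrix.trace_add, Matrix.mul_smul, Matrix.mul_one,
        Matrix.trace_smul, smul_eq_mul]
    rw [hsplit2, Complex.add_re]
    have : ((ε : ℂ) * V.trace).re = ε * (V.trace).re := by
      simp [Complex.mul_re]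
    rw [this]
    have : ε * (V.trace).re ≤ ε * n := by
      exact mul_le_mul_of_nonneg_left hb2 hε.le
    have hTnorm : (T.trace).re = traceNorm M := rfl
    linarith
  by_contra hcon
  push_neg at hcon
  set δ := (M.trace).re - traceNorm M with hδ
  have hδpos : 0 < δ := by linarith
  have := main (δ / (2 * (n + 1))) (by positivity)
  have hn : (δ / (2 * (n + 1))) * n < δ := by
    rw [div_mul_eq_mul_div]
    rw [div_lt_iff₀ (by positivity)]
    nlinarith [hδpos]
  linarith

lemma sqrt_smul {c : ℝ} (hc : 0 ≤ c) {ρ : Matrix (Fin n) (Fin n) ℂ} (hρ : ρ.PosSemidef)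
    (hP : ((c : ℂ) • ρ).PosSemidef) :
    hP.sqrt = ((Real.sqrt c : ℝ) : ℂ) • hρ.sqrt := by
  have hB : (((Real.sqrt c : ℝ) : ℂ) • hρ.sqrt).PosSemidef :=
    smul_posSemidef (Real.sqrt_nonneg c) hρ.posSemidef_sqrt
  have hsq : (((Real.sqrt c : ℝ) : ℂ) • hρ.sqrt) ^ 2 = (c : ℂ) • ρ := by
    rw [pow_two, Matrix.smul_mul, Matrix.mul_smul, smul_smul, ← Complex.ofReal_mul,
      Real.mul_self_sqrt hc, hρ.sqrt_mul_self]
  exact (hB.eq_sqrt_of_sq_eq hP hsq).symm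

lemma matAbs_smul {c : ℝ} (hc : 0 ≤ c) (M : Matrix (Fin n) (Fin n) ℂ) :
    matAbs ((c : ℂ) • M) = (c : ℂ) • matAbs M := by
  have hB : ((c : ℂ) • matAbs M).PosSemidef :=
    smul_posSemidef hc (Matrix.posSemidef_conjTranspose_mul_self M).posSemidef_sqrt
  have hsq : ((c : ℂ) • matAbs M) ^ 2 = ((c : ℂ) • M)ᴴ * ((c : ℂ) • M) := by
    rw [pow_two, Matrix.smul_mul, Matrix.mul_smul, smul_smul, Matrix.conjTranspose_smul,
      Complex.star_def, Complex.conj_ofReal, Matrix.smul_mul, Matrix.mul_smul, smul_smul]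
    congr 1
    exact (Matrix.posSemidef_conjTranspose_mul_self M).sqrt_mul_self
  exact (hB.eq_sqrt_of_sq_eq (Matrix.posSemidef_conjTranspose_mul_self _) hsq).symm

lemma traceNorm_smul {c : ℝ} (hc : 0 ≤ c) (M : Matrix (Fin n) (Fin n) ℂ) :
    traceNorm ((c : ℂ) • M) = c * traceNorm M := by
  unfold traceNorm
  rw [matAbs_smul hc, Matrix.trace_smul, smul_eq_mul]
  simp [Complex.mul_re]

lemma traceNorm_nonneg (M : Matrix (Fin n) (Fin n) ℂ) : 0 ≤ traceNorm M :=
  trace_re_nonneg (Matrix.posSemidef_conjTranspose_mul_self M).posSemidef_sqrt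

/-- weighted Fuchs–van de Graaf lower bound -/
lemma pair_ineq {ρ σ : Matrix (Fin n) (Fin n) ℂ} (hρ : ρ.PosSemidef) (hσ : σ.PosSemidef)
    (hρt : ρ.trace = 1) (hσt : σ.trace = 1) {a b : ℝ} (ha : 0 ≤ a) (hb : 0 ≤ b) :
    a + b - traceNorm ((a : ℂ) • ρ - (b : ℂ) • σ)
      ≤ 2 * (Real.sqrt (a * b) * traceNorm (hρ.sqrt * hσ.sqrt)) := by
  have hP : ((a : ℂ) • ρ).PosSemidef := smul_posSemidef ha hρ
  have hQ : ((b : ℂ) • σ).PosSemidef := smul_posSemidef hb hσ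
  have hps := powers_stormer hP hQ
  have htrP : (((a : ℂ) • ρ).trace).re = a := by
    rw [Matrix.trace_smul, smul_eq_mul, hρt, mul_one, Complex.ofReal_re]
  have htrQ : (((b : ℂ) • σ).trace).re = b := by
    rw [Matrix.trace_smul, smul_eq_mul, hσt, mul_one, Complex.ofReal_re]
  have hprod : hP.sqrt * hQ.sqrt
      = ((Real.sqrt a * Real.sqrt b : ℝ) : ℂ) • (hρ.sqrt * hσ.sqrt) := by
    rw [sqrt_smul ha hρ hP, sqrt_smul hb hσ hQ, Matrix.smul_mul, Matrix.mul_smul, smul_smul,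
      ← Complex.ofReal_mul]
  have htr : ((hP.sqrt * hQ.sqrt).trace).re
      = (Real.sqrt a * Real.sqrt b) * (((hρ.sqrt * hσ.sqrt).trace).re) := by
    rw [hprod, Matrix.trace_smul, smul_eq_mul]
    simp [Complex.mul_re]
  have hle : ((hρ.sqrt * hσ.sqrt).trace).re ≤ traceNorm (hρ.sqrt * hσ.sqrt) :=
    trace_re_le_traceNorm _
  have hsab : Real.sqrt (a * b) = Real.sqrt a * Real.sqrt b := Real.sqrt_mul ha b
  have hnn : 0 ≤ Real.sqrt a * Real.sqrt b :=
    mul_nonneg (Real.sqrt_nonneg a) (Real.sqrt_nonneg b)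
  have h2 : (Real.sqrt a * Real.sqrt b) * (((hρ.sqrt * hσ.sqrt).trace).re)
      ≤ (Real.sqrt a * Real.sqrt b) * traceNorm (hρ.sqrt * hσ.sqrt) :=
    mul_le_mul_of_nonneg_left hle hnn
  rw [htrP, htrQ, htr] at hps
  rw [hsab]
  linarith

lemma sum_pairs {r : ℕ} (q : Fin r → ℝ) (hq1 : ∑ i, q i = 1) :
    ∑ p ∈ Finset.univ.filter (fun p : Fin r × Fin r => p.1 < p.2), (q p.1 + q p.2)
      = (r : ℝ) - 1 := by
  rw [Finset.sum_filter, Fintype.sum_prod_type]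
  have key : ∀ i : Fin r, ∑ j, ((if i < j then q i + q j else 0) + (if j < i then q i + q j else 0))
      = ∑ j, ((if i ≠ j then q i else 0) + (if i ≠ j then q j else 0)) := by
    intro i
    apply Finset.sum_congr rfl
    intro j _
    rcases lt_trichotomy i j with h | h | h
    · simp [h, not_lt.mpr h.le, h.ne]
    · simp [h]
    · simp [h, not_lt.mpr h.le, h.ne', ne_comm]
  have swap : ∑ i, ∑ j, (if (j : Fin r) < i then q i + q j else 0)
      = ∑ i, ∑ j, (if (i : Fin r) < j then q i + q j else 0) := by
    rw [Finset.sum_comm]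
    apply Finset.sum_congr rfl; intro i _
    apply Finset.sum_congr rfl; intro j _
    rw [add_comm]
  have h2 : (∑ i, ∑ j, if (i : Fin r) < j then q i + q j else 0)
        + (∑ i, ∑ j, if (i : Fin r) < j then q i + q j else 0)
      = ∑ i, ∑ j, ((if i ≠ j then q i else 0) + (if i ≠ j then q j else 0)) := by
    calc (∑ i, ∑ j, if (i : Fin r) < j then q i + q j else 0)
          + (∑ i, ∑ j, if (i : Fin r) < j then q i + q j else 0)
        = (∑ i, ∑ j, if (i : Fin r) < j then q i + q j else 0)
          + (∑ i, ∑ j, if (j : Fin r) < i then q i + q j else 0) := by rw [swap]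
      _ = ∑ i, ∑ j, ((if (i : Fin r) < j then q i + q j else 0)
            + (if (j : Fin r) < i then q i + q j else 0)) := by
          rw [← Finset.sum_add_distrib]
          exact Finset.sum_congr rfl fun i _ => (Finset.sum_add_distrib).symm
      _ = ∑ i, ∑ j, ((if i ≠ j then q i else 0) + (if i ≠ j then q j else 0)) :=
          Finset.sum_congr rfl fun i _ => key i
  have h3 : ∑ i : Fin r, ∑ j : Fin r, ((if i ≠ j then q i else 0) + (if i ≠ j then q j else 0))
      = 2 * ((r : ℝ) - 1) := by
    have e1 : ∀ i : Fin r, ∑ j : Fin r, (if i ≠ j then q i else 0) = (r : ℝ) * q i - q i := by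
      intro i
      have : ∀ j : Fin r, (if i ≠ j then q i else 0) = q i - (if i = j then q i else 0) := by
        intro j; by_cases h : i = j <;> simp [h]
      simp_rw [this, Finset.sum_sub_distrib, Finset.sum_const, Finset.sum_ite_eq,
        Finset.mem_univ, if_pos, Finset.card_univ, Fintype.card_fin, nsmul_eq_mul]
    have e2 : ∀ i : Fin r, (∑ j : Fin r, if i ≠ j then q j else 0)
        = (∑ j : Fin r, q j) - q i := by
      intro i
      have : ∀ j : Fin r, (if i ≠ j then q j else 0) = q j - (if i = j then q j else 0) := by
        intro j; by_cases h : i = j <;> simp [h]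
      simp_rw [this, Finset.sum_sub_distrib]
      congr 1
      rw [Finset.sum_ite_eq, if_pos (Finset.mem_univ i)]
    simp_rw [Finset.sum_add_distrib]
    rw [Finset.sum_congr rfl (fun i _ => e1 i), Finset.sum_congr rfl (fun i _ => e2 i)]
    rw [Finset.sum_sub_distrib, Finset.sum_sub_distrib, ← Finset.mul_sum, hq1]
    simp [Finset.sum_const, Finset.card_univ]
    ring
  linarith [h2, h3]

lemma arith {r : ℕ} (hr : 2 ≤ r) {S F : ℝ} (hS0 : 0 ≤ S)
    (hSle : S ≤ ((r : ℝ) - 1) ^ 2 / ((r : ℝ) + 1))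
    (hF : ((r : ℝ) - 1) / 2 - S / 2 ≤ F) :
    1 - F ≤ (1 / (r : ℝ)) * (1 + (1 / ((r : ℝ) - 1)) * S) := by
  set x := (r : ℝ) with hx
  have hx2 : (2 : ℝ) ≤ x := by rw [hx]; exact_mod_cast hr
  have hx0 : (0 : ℝ) < x := by linarith
  have hx1 : (0 : ℝ) < x - 1 := by linarith
  have hxp : (0 : ℝ) < x + 1 := by linarith
  have hkey : S * (x + 1) ≤ (x - 1) ^ 2 := by
    rw [← le_div_iff₀ hxp]; exact hSle
  have hmain : 0 ≤ (x - 2) * ((x - 1) ^ 2 - S * (x + 1)) :=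
    mul_nonneg (by linarith) (by linarith)
  have hgoal : 1 - F ≤ 1 - ((x - 1) / 2 - S / 2) := by linarith
  refine hgoal.trans ?_
  rw [← sub_nonneg]
  have hq : (1 / x) * (1 + (1 / (x - 1)) * S) - (1 - ((x - 1) / 2 - S / 2))
      = ((x - 2) * ((x - 1) ^ 2 - S * (x + 1))) / (2 * x * (x - 1)) := by
    field_simp
    ring
  rw [hq]
  exact div_nonneg hmain (by positivity)

end Aux
end AuxSection

theorem stmt17 {n r : ℕ} (hr : 2 ≤ r) (ρ : Fin r → Matrix (Fin n) (Fin n) ℂ)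
    (q : Fin r → ℝ) (hρ : ∀ i, IsDensity (ρ i)) (hq : ∀ i, 0 < q i)
    (hq1 : ∑ i, q i = 1)
    (hS : ∑ p ∈ Finset.univ.filter (fun p : Fin r × Fin r => p.1 < p.2),
            traceNorm ((q p.1 : ℂ) • ρ p.1 - (q p.2 : ℂ) • ρ p.2)
        ≤ ((r : ℝ) - 1) ^ 2 / ((r : ℝ) + 1)) :
    (1 / (r : ℝ)) * (1 + (1 / ((r : ℝ) - 1)) *
        ∑ p ∈ Finset.univ.filter (fun p : Fin r × Fin r => p.1 < p.2),
            traceNorm ((q p.1 : ℂ) • ρ p.1 - (q p.2 : ℂ) • ρ p.2))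
      ≥ 1 - ∑ p ∈ Finset.univ.filter (fun p : Fin r × Fin r => p.1 < p.2),
          Real.sqrt (q p.1 * q p.2) * fidelity (hρ p.1).1 (hρ p.2).1 := by
  classical
  set Pst := Finset.univ.filter (fun p : Fin r × Fin r => p.1 < p.2) with hPst
  set S := ∑ p ∈ Pst, traceNorm ((q p.1 : ℂ) • ρ p.1 - (q p.2 : ℂ) • ρ p.2) with hSdef
  have hS0 : 0 ≤ S := Finset.sum_nonneg fun p _ => Aux.traceNorm_nonneg _
  have hpair : ∀ p ∈ Pst, (q p.1 + q p.2) / 2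
      - traceNorm ((q p.1 : ℂ) • ρ p.1 - (q p.2 : ℂ) • ρ p.2) / 2
      ≤ Real.sqrt (q p.1 * q p.2) * fidelity (hρ p.1).1 (hρ p.2).1 := by
    intro p _
    have h := Aux.pair_ineq (hρ p.1).1 (hρ p.2).1 (hρ p.1).2 (hρ p.2).2
      (hq p.1).le (hq p.2).le
    have hfid : fidelity (hρ p.1).1 (hρ p.2).1
        = traceNorm ((hρ p.1).1.sqrt * (hρ p.2).1.sqrt) := rfl
    rw [hfid]
    linarith
  have hFsum : ((r : ℝ) - 1) / 2 - S / 2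
      ≤ ∑ p ∈ Pst, Real.sqrt (q p.1 * q p.2) * fidelity (hρ p.1).1 (hρ p.2).1 := by
    have hsum := Finset.sum_le_sum hpair
    have heq : ∑ p ∈ Pst, ((q p.1 + q p.2) / 2
        - traceNorm ((q p.1 : ℂ) • ρ p.1 - (q p.2 : ℂ) • ρ p.2) / 2)
        = ((r : ℝ) - 1) / 2 - S / 2 := by
      rw [Finset.sum_sub_distrib, ← Finset.sum_div, ← Finset.sum_div, Aux.sum_pairs q hq1]
    linarith
  have := Aux.arith hr hS0 hS hFsum
  exact this
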